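/- Let Y : ℝ → ℝ satisfy Y' = -Y² + 1/440, for instance Y(z) = (1/(2√110))·tanh(z/(2√110) + φ₀). Then for any C₀ ∈ ℝ, the function y = C₀ + (189/121)Y - (3780/11)Y³ + 30240Y⁵ satisfies the sixth-order-model travelling-wave equation y''''' - y''' + (3259/12100)y' + (1/2)y² - C₀y - 321489/322102000 + (1/2)C₀² = 0. -/

import Mathlib

theorem sixth_order_model_exact_solution_1 (Y : ℝ → ℝ) (C₀ : ℝ)
    (hY : Differentiable ℝ Y)
    (hRic : ∀ z, deriv Y z = -(Y z) ^ 2 + 1 / 440)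
    (y : ℝ → ℝ)
    (hydef : y = fun z => C₀ + (189 / 121) * Y z - (3780 / 11) * (Y z) ^ 3
      + 30240 * (Y z) ^ 5) :
    ∀ z, deriv (deriv (deriv (deriv (deriv y)))) z
      - deriv (deriv (deriv y)) z
      + (3259 / 12100) * deriv y z
      + (1 / 2) * (y z) ^ 2 - C₀ * y z
      - 321489 / 322102000 + (1 / 2) * C₀ ^ 2 = 0 := by
  have key : ∀ (p : ℝ → ℝ) (q : ℝ → ℝ),
      (∀ z, HasDerivAt p (q z) z) → deriv p = q := fun p q h => funext fun z => (h z).deriv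

  have h1 : deriv (fun z => C₀ + (189 / 121 : ℝ) * Y z + (-3780 / 11 : ℝ) * Y z ^ 3 + (30240 : ℝ) * Y z ^ 5) = (fun z => (189 / 53240 : ℝ) + (-945 / 242 : ℝ) * Y z ^ 2 + (15120 / 11 : ℝ) * Y z ^ 4 + (-151200 : ℝ) * Y z ^ 6) := by
    funext z
    have HY : HasDerivAt Y (-(Y z) ^ 2 + 1 / 440) z := hRic z ▸ (hY z).hasDerivAt
    have H := ((((HY.const_mul (189 / 121 : ℝ)).const_add C₀).add ((HY.pow 3).const_mul (-3780 / 11 : ℝ))).add ((HY.pow 5).const_mul (30240 : ℝ)))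
    refine H.deriv.trans ?_
    push_cast
    ring
  have h2 : deriv (fun z => (189 / 53240 : ℝ) + (-945 / 242 : ℝ) * Y z ^ 2 + (15120 / 11 : ℝ) * Y z ^ 4 + (-151200 : ℝ) * Y z ^ 6) = (fun z => (-189 / 10648 : ℝ) * Y z + (2457 / 121 : ℝ) * Y z ^ 3 + (-7560 : ℝ) * Y z ^ 5 + (907200 : ℝ) * Y z ^ 7) := by
    funext z
    have HY : HasDerivAt Y (-(Y z) ^ 2 + 1 / 440) z := hRic z ▸ (hY z).hasDerivAt
    have H := (((((HY.pow 2).const_mul (-945 / 242 : ℝ)).const_add (189 / 53240 : ℝ)).add ((HY.pow 4).const_mul (15120 / 11 : ℝ))).add ((HY.pow 6).const_mul (-151200 : ℝ)))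
    refine H.deriv.trans ?_
    push_cast
    ring
  have h3 : deriv (fun z => (-189 / 10648 : ℝ) * Y z + (2457 / 121 : ℝ) * Y z ^ 3 + (-7560 : ℝ) * Y z ^ 5 + (907200 : ℝ) * Y z ^ 7) = (fun z => (-189 / 4685120 : ℝ) + (189 / 1210 : ℝ) * Y z ^ 2 + (-17766 / 121 : ℝ) * Y z ^ 4 + (574560 / 11 : ℝ) * Y z ^ 6 + (-6350400 : ℝ) * Y z ^ 8) := by
    funext z
    have HY : HasDerivAt Y (-(Y z) ^ 2 + 1 / 440) z := hRic z ▸ (hY z).hasDerivAt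
    have H := ((((HY.const_mul (-189 / 10648 : ℝ)).add ((HY.pow 3).const_mul (2457 / 121 : ℝ))).add ((HY.pow 5).const_mul (-7560 : ℝ))).add ((HY.pow 7).const_mul (907200 : ℝ)))
    refine H.deriv.trans ?_
    push_cast
    ring
  have h4 : deriv (fun z => (-189 / 4685120 : ℝ) + (189 / 1210 : ℝ) * Y z ^ 2 + (-17766 / 121 : ℝ) * Y z ^ 4 + (574560 / 11 : ℝ) * Y z ^ 6 + (-6350400 : ℝ) * Y z ^ 8) = (fun z => (189 / 266200 : ℝ) * Y z + (-10962 / 6655 : ℝ) * Y z ^ 3 + (157248 / 121 : ℝ) * Y z ^ 5 + (-4717440 / 11 : ℝ) * Y z ^ 7 + (50803200 : ℝ) * Y z ^ 9) := by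
    funext z
    have HY : HasDerivAt Y (-(Y z) ^ 2 + 1 / 440) z := hRic z ▸ (hY z).hasDerivAt
    have H := ((((((HY.pow 2).const_mul (189 / 1210 : ℝ)).const_add (-189 / 4685120 : ℝ)).add ((HY.pow 4).const_mul (-17766 / 121 : ℝ))).add ((HY.pow 6).const_mul (574560 / 11 : ℝ))).add ((HY.pow 8).const_mul (-6350400 : ℝ)))
    refine H.deriv.trans ?_
    push_cast
    ring
  have h5 : deriv (fun z => (189 / 266200 : ℝ) * Y z + (-10962 / 6655 : ℝ) * Y z ^ 3 + (157248 / 121 : ℝ) * Y z ^ 5 + (-4717440 / 11 : ℝ) * Y z ^ 7 + (50803200 : ℝ) * Y z ^ 9) = (fun z => (189 / 117128000 : ℝ) + (-6993 / 585640 : ℝ) * Y z ^ 2 + (131166 / 6655 : ℝ) * Y z ^ 4 + (-1611792 / 121 : ℝ) * Y z ^ 6 + (44452800 / 11 : ℝ) * Y z ^ 8 + (-457228800 : ℝ) * Y z ^ 10) := by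
    funext z
    have HY : HasDerivAt Y (-(Y z) ^ 2 + 1 / 440) z := hRic z ▸ (hY z).hasDerivAt
    have H := (((((HY.const_mul (189 / 266200 : ℝ)).add ((HY.pow 3).const_mul (-10962 / 6655 : ℝ))).add ((HY.pow 5).const_mul (157248 / 121 : ℝ))).add ((HY.pow 7).const_mul (-4717440 / 11 : ℝ))).add ((HY.pow 9).const_mul (50803200 : ℝ)))
    refine H.deriv.trans ?_
    push_cast
    ring
  intro z
  have hy0 : y = (fun z => C₀ + (189 / 121 : ℝ) * Y z + (-3780 / 11 : ℝ) * Y z ^ 3 + (30240 : ℝ) * Y z ^ 5) := by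
    rw [hydef]; funext w; ring
  rw [hy0, h1, h2, h3, h4, h5]
  ring
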